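/- Writing u_n = q_1^{a_1}···q_k^{a_k} for distinct primes q_i, set B = ∏ q_i^{a_i−1}. If φ(u_n) = u_m with n > m ≥ 1, then B divides u_{gcd(m,n)}, and hence B divides u_{n−m} when gcd(m,n) divides n−m. -/

import Mathlib

namespace Stmt18

def luc (P : ℕ) : ℕ → ℕ
  | 0 => 0
  | 1 => 1
  | n + 2 => P * luc P (n + 1) + luc P n

variable (P : ℕ)

lemma luc_add_two (n : ℕ) : luc P (n + 2) = P * luc P (n + 1) + luc P n := rfl

lemma luc_pos (hP : 1 ≤ P) : ∀ n, 1 ≤ n → 0 < luc P n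
  | 1, _ => by simp [luc]
  | n + 2, _ => by
    have := luc_pos hP (n + 1) (Nat.le_add_left _ _)
    have : 0 < P * luc P (n + 1) := Nat.mul_pos hP this
    simpa [luc_add_two] using Nat.lt_of_lt_of_le this (Nat.le_add_right _ _)

lemma luc_coprime_succ (n : ℕ) : Nat.Coprime (luc P n) (luc P (n + 1)) := by
  induction' n with n ih
  · simp [luc]
  · unfold Nat.Coprime at *
    rw [luc_add_two, Nat.add_comm (P * luc P (n + 1)), Nat.gcd_add_mul_right_right, Nat.gcd_comm]
    exact ih

lemma luc_add (m n : ℕ) :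
    luc P (m + n + 1) = luc P m * luc P n + luc P (m + 1) * luc P (n + 1) := by
  induction' n with n ih generalizing m
  · simp [luc]
  · rw [show m + (n + 1) + 1 = (m + 1) + n + 1 from by ring, ih (m + 1), luc_add_two,
      luc_add_two]
    ring

lemma gcd_luc_add_self (m n : ℕ) :
    Nat.gcd (luc P m) (luc P (n + m)) = Nat.gcd (luc P m) (luc P n) := by
  rcases Nat.eq_zero_or_pos n with rfl | h
  · simp [luc]
  replace h := Nat.succ_pred_eq_of_pos h
  rw [← h, Nat.succ_eq_add_one]
  calc
    Nat.gcd (luc P m) (luc P (n.pred + 1 + m)) =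
        Nat.gcd (luc P m) (luc P n.pred * luc P m + luc P (n.pred + 1) * luc P (m + 1)) := by
        rw [show n.pred + 1 + m = n.pred + m + 1 from by ring, luc_add]
    _ = Nat.gcd (luc P m) (luc P (n.pred + 1) * luc P (m + 1)) := by
        rw [add_comm, Nat.gcd_add_mul_right_right (luc P m) _ (luc P n.pred)]
    _ = Nat.gcd (luc P m) (luc P (n.pred + 1)) :=
      Nat.Coprime.gcd_mul_right_cancel_right (luc P (n.pred + 1))
        (Nat.Coprime.symm (luc_coprime_succ P m))

lemma gcd_luc_add_mul_self (m n : ℕ) :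
    ∀ k, Nat.gcd (luc P m) (luc P (n + k * m)) = Nat.gcd (luc P m) (luc P n)
  | 0 => by simp [luc]
  | k + 1 => by
    rw [← gcd_luc_add_mul_self m n k, add_mul, ← add_assoc, one_mul, gcd_luc_add_self]

lemma luc_gcd (m n : ℕ) : luc P (Nat.gcd m n) = Nat.gcd (luc P m) (luc P n) := by
  induction m, n using Nat.gcd.induction with
  | H0 => simp [luc]
  | H1 m n _ h' =>
    rw [← Nat.gcd_rec m n] at h'
    conv_rhs => rw [← Nat.mod_add_div' n m]
    rwa [gcd_luc_add_mul_self P m (n % m) (n / m), Nat.gcd_comm (luc P m) _]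

lemma luc_dvd (m n : ℕ) (h : m ∣ n) : luc P m ∣ luc P n := by
  rwa [← Nat.gcd_eq_left_iff_dvd, ← luc_gcd, Nat.gcd_eq_left_iff_dvd.mpr]

end Stmt18

open Stmt18 in
theorem stmt_18 (P : ℕ) (hP : 3 ≤ P) (u : ℕ → ℕ)
    (hu0 : u 0 = 0) (hu1 : u 1 = 1)
    (hrec : ∀ n, 2 ≤ n → u n = P * u (n - 1) + u (n - 2))
    (n m : ℕ) (hm : 1 ≤ m) (hmn : m < n)
    (h : Nat.totient (u n) = u m)
    (B : ℕ)
    (hB : B = ∏ q ∈ (u n).primeFactors, q ^ ((u n).factorization q - 1)) :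
    B ∣ u (Nat.gcd m n) ∧ (Nat.gcd m n ∣ n - m → B ∣ u (n - m)) := by
  -- u agrees with luc P
  have hu : ∀ k, u k = luc P k := by
    intro k
    induction k using Nat.strong_induction_on with
    | _ k ih =>
      match k with
      | 0 => simpa [luc] using hu0
      | 1 => simpa [luc] using hu1
      | k + 2 =>
        rw [hrec (k + 2) (by omega)]
        simp only [show k + 2 - 1 = k + 1 from rfl, show k + 2 - 2 = k from rfl]
        rw [ih (k + 1) (by omega), ih k (by omega), luc_add_two]
  have hP1 : 1 ≤ P := by omega
  have hun : u n ≠ 0 := by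
    rw [hu]; exact (luc_pos P hP1 n (by omega)).ne'
  -- B divides u n
  have hBn : B ∣ u n := by
    rw [hB]
    conv_rhs => rw [← Nat.factorization_prod_pow_eq_self hun]
    rw [Nat.prod_factorization_eq_prod_primeFactors]
    exact Finset.prod_dvd_prod_of_dvd _ _ fun q _ =>
      pow_dvd_pow q (Nat.sub_le _ _)
  -- B divides u m = totient (u n)
  have hBm : B ∣ u m := by
    rw [← h, Nat.totient_eq_prod_factorization hun,
      Nat.prod_factorization_eq_prod_primeFactors, hB]
    exact Finset.prod_dvd_prod_of_dvd _ _ fun q _ =>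
      Dvd.intro _ rfl
  -- B divides u (gcd m n)
  have hgcd : B ∣ u (Nat.gcd m n) := by
    rw [hu] at *
    rw [luc_gcd]
    exact Nat.dvd_gcd hBm hBn
  refine ⟨hgcd, fun hd => ?_⟩
  have hdvd := luc_dvd P (Nat.gcd m n) (n - m) hd
  rw [hu (Nat.gcd m n)] at hgcd
  rw [hu (n - m)]
  exact hgcd.trans hdvd
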